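/- arXiv:1912.12802 — 3 statements merged into one kernel-verified Lean document; each statement's English description precedes it below -/
import Mathlib

section
/- The potential function Ψ is an exact potential for the route selection game: for every strategy profile s, every player m, and every alternative strategy s'_m ∈ S_m, Ψ(s'_m, s_{−m}) − Ψ(s) = Ũ_m(s'_m, s_{−m}) − Ũ_m(s). (Theorem 1, core claim.) -/
open Finset

variable {ι V : Type*} [Fintype ι] [Nonempty ι] [DecidableEq ι] [Fintype V] [DecidableEq V]
variable {S : ι → Type*} [∀ m, Fintype (S m)] [∀ m, Nonempty (S m)]

/-- The congestion `z_v(s)`: the number of players whose strategy uses vertex `v`. -/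
def congestion (Vert : ∀ m : ι, S m → Finset V) (s : ∀ n, S n) (v : V) : ℕ :=
  (Finset.univ.filter fun n => v ∈ Vert n (s n)).card

/-- The reward part `Ũ^V_m(s)` of player `m`'s payoff. -/
def payoffV (Vert : ∀ m : ι, S m → Finset V) (ϱ : V → ℕ → ℝ) (m : ι) (s : ∀ n, S n) : ℝ :=
  ∑ v ∈ Vert m (s m), ϱ v (congestion Vert s v)

/-- Player `m`'s payoff `Ũ_m(s) = Σ_{v ∈ Vert(s_m)} ϱ_v(z_v(s)) − c_m(s_m)`. -/
def payoff (Vert : ∀ m : ι, S m → Finset V) (ϱ : V → ℕ → ℝ) (c : ∀ m : ι, S m → ℝ)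
    (m : ι) (s : ∀ n, S n) : ℝ :=
  payoffV Vert ϱ m s - c m (s m)

/-- The vertex part `Ψ^V(s) = Σ_{v ∈ V} Σ_{q=1}^{z_v(s)} ϱ_v(q)` of the potential. -/
def potentialV (Vert : ∀ m : ι, S m → Finset V) (ϱ : V → ℕ → ℝ) (s : ∀ n, S n) : ℝ :=
  ∑ v : V, ∑ q ∈ Finset.Icc 1 (congestion Vert s v), ϱ v q

/-- The potential `Ψ(s) = Σ_{v ∈ V} Σ_{q=1}^{z_v(s)} ϱ_v(q) − Σ_{n∈ι} c_n(s_n)`. -/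
def potential (Vert : ∀ m : ι, S m → Finset V) (ϱ : V → ℕ → ℝ) (c : ∀ m : ι, S m → ℝ)
    (s : ∀ n, S n) : ℝ :=
  potentialV Vert ϱ s - ∑ n : ι, c n (s n)

lemma sum_Icc_add_ind (f : ℕ → ℝ) (k a : ℕ) (ha : a ≤ 1) :
    ∑ q ∈ Finset.Icc 1 (k + a), f q
      = (∑ q ∈ Finset.Icc 1 k, f q) + if a = 1 then f (k + 1) else 0 := by
  interval_cases a
  · simp
  · rw [Finset.sum_Icc_succ_top (Nat.succ_le_succ (Nat.zero_le k))]
    simp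

lemma congestion_eq (Vert : ∀ m : ι, S m → Finset V) (s : ∀ n, S n) (m : ι) (v : V) :
    congestion Vert s v
      = ((Finset.univ.erase m).filter fun n => v ∈ Vert n (s n)).card
        + if v ∈ Vert m (s m) then 1 else 0 := by
  unfold congestion
  conv_lhs => rw [← Finset.insert_erase (Finset.mem_univ m), Finset.filter_insert]
  split
  · rw [Finset.card_insert_of_notMem (by simp)]
  · simp

/-- The potential `Ψ` is an exact potential for the route selection game: for every
strategy profile `s`, player `m`, and alternative strategy `s'`,
`Ψ(s'_m, s_{−m}) − Ψ(s) = Ũ_m(s'_m, s_{−m}) − Ũ_m(s)`. -/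
theorem exact_potential (Vert : ∀ m : ι, S m → Finset V) (ϱ : V → ℕ → ℝ)
    (c : ∀ m : ι, S m → ℝ) (s : ∀ n, S n) (m : ι) (s' : S m) :
    potential Vert ϱ c (Function.update s m s') - potential Vert ϱ c s =
      payoff Vert ϱ c m (Function.update s m s') - payoff Vert ϱ c m s := by
  set z0 : V → ℕ := fun v => ((Finset.univ.erase m).filter fun n => v ∈ Vert n (s n)).card
    with hz0
  have hz : ∀ v, congestion Vert s v = z0 v + if v ∈ Vert m (s m) then 1 else 0 :=
    fun v => congestion_eq Vert s m v
  have hz' : ∀ v, congestion Vert (Function.update s m s') v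
      = z0 v + if v ∈ Vert m s' then 1 else 0 := by
    intro v
    rw [congestion_eq Vert _ m v, Function.update_self]
    congr 2
    apply Finset.filter_congr
    intro n hn
    rw [Function.update_of_ne (Finset.ne_of_mem_erase hn)]
  have hc : (∑ n : ι, c n (Function.update s m s' n)) - ∑ n : ι, c n (s n)
      = c m s' - c m (s m) := by
    rw [← Finset.sum_sub_distrib, Finset.sum_eq_single m]
    · simp
    · intro n _ hn; rw [Function.update_of_ne hn]; ring
    · simp
  have e1 : ∀ (A : Finset V) (g : V → ℝ), (∑ v : V, if v ∈ A then g v else 0) = ∑ v ∈ A, g v := by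
    intro A g; rw [Finset.sum_ite_mem, Finset.univ_inter]
  have hV : potentialV Vert ϱ (Function.update s m s') - potentialV Vert ϱ s
      = payoffV Vert ϱ m (Function.update s m s') - payoffV Vert ϱ m s := by
    unfold potentialV payoffV
    rw [← Finset.sum_sub_distrib]
    have key : ∀ v : V, (∑ q ∈ Finset.Icc 1 (congestion Vert (Function.update s m s') v), ϱ v q)
        - (∑ q ∈ Finset.Icc 1 (congestion Vert s v), ϱ v q)
        = (if v ∈ Vert m s' then ϱ v (z0 v + 1) else 0)
          - (if v ∈ Vert m (s m) then ϱ v (z0 v + 1) else 0) := by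
      intro v
      rw [hz, hz', sum_Icc_add_ind _ _ _ (by split <;> simp),
        sum_Icc_add_ind _ _ _ (by split <;> simp)]
      by_cases h1 : v ∈ Vert m s' <;> by_cases h2 : v ∈ Vert m (s m) <;> simp [h1, h2]
    rw [Finset.sum_congr rfl (fun v _ => key v), Finset.sum_sub_distrib, e1, e1,
      Function.update_self]
    congr 1
    · exact Finset.sum_congr rfl fun v hv => by rw [hz', if_pos hv]
    · exact Finset.sum_congr rfl fun v hv => by rw [hz, if_pos hv]
  unfold potential payoff
  simp only [Function.update_self]
  linarith [hV, hc]
end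

section
/- Vertex-part potential difference (equation (40) of the paper): for every strategy profile s, player m, and alternative strategy s'_m ∈ S_m, writing s' = (s'_m, s_{−m}), Ψ^V(s') − Ψ^V(s) = Σ_{v ∈ Vert(s'_m) \ Vert(s_m)} ϱ_v(z_v(s')) − Σ_{v ∈ Vert(s_m) \ Vert(s'_m)} ϱ_v(z_v(s)), where Ψ^V(s) = Σ_{v ∈ V} Σ_{q=1}^{z_v(s)} ϱ_v(q) is the vertex (reward) part of the potential. -/
open Finset

variable {ι V : Type*} [Fintype ι] [Nonempty ι] [DecidableEq ι] [Fintype V] [DecidableEq V]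
variable {S : ι → Type*} [∀ m, Fintype (S m)] [∀ m, Nonempty (S m)]

lemma congestion_update_key (Vert : ∀ m : ι, S m → Finset V)
    (s : ∀ n, S n) (m : ι) (s' : S m) (v : V) :
    congestion Vert (Function.update s m s') v + (if v ∈ Vert m (s m) then 1 else 0) =
      congestion Vert s v + (if v ∈ Vert m s' then 1 else 0) := by
  classical
  unfold congestion
  set A := Finset.univ.filter fun n => v ∈ Vert n (s n) with hA
  set A' := Finset.univ.filter fun n => v ∈ Vert n (Function.update s m s' n) with hA'
  have hE : A.erase m = A'.erase m := by
    ext n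
    simp only [Finset.mem_erase, hA, hA', Finset.mem_filter, Finset.mem_univ, true_and]
    constructor
    · rintro ⟨hn, h⟩; exact ⟨hn, by rwa [Function.update_of_ne hn]⟩
    · rintro ⟨hn, h⟩; exact ⟨hn, by rwa [Function.update_of_ne hn] at h⟩
  have card_eq : ∀ (B : Finset ι), B.card = (B.erase m).card + (if m ∈ B then 1 else 0) := by
    intro B
    by_cases h : m ∈ B
    · have := Finset.card_erase_add_one h; simp [h]; omega
    · simp [h, Finset.erase_eq_of_notMem h]
  have hmA : m ∈ A ↔ v ∈ Vert m (s m) := by simp [hA]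
  have hmA' : m ∈ A' ↔ v ∈ Vert m s' := by simp [hA']
  rw [card_eq A, card_eq A', hE]
  by_cases h1 : v ∈ Vert m s' <;> by_cases h2 : v ∈ Vert m (s m) <;>
    simp [hmA, hmA', h1, h2]

lemma congestion_update_of_mem_notMem (Vert : ∀ m : ι, S m → Finset V)
    (s : ∀ n, S n) (m : ι) (s' : S m) (v : V)
    (h1 : v ∈ Vert m s') (h2 : v ∉ Vert m (s m)) :
    congestion Vert (Function.update s m s') v = congestion Vert s v + 1 := by
  have := congestion_update_key Vert s m s' v
  simp [h1, h2] at this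
  omega

lemma congestion_update_of_notMem_mem (Vert : ∀ m : ι, S m → Finset V)
    (s : ∀ n, S n) (m : ι) (s' : S m) (v : V)
    (h1 : v ∉ Vert m s') (h2 : v ∈ Vert m (s m)) :
    congestion Vert s v = congestion Vert (Function.update s m s') v + 1 := by
  have := congestion_update_key Vert s m s' v
  simp [h1, h2] at this
  omega

lemma congestion_update_of_iff (Vert : ∀ m : ι, S m → Finset V)
    (s : ∀ n, S n) (m : ι) (s' : S m) (v : V)
    (h : (v ∈ Vert m s') ↔ (v ∈ Vert m (s m))) :
    congestion Vert (Function.update s m s') v = congestion Vert s v := by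
  have := congestion_update_key Vert s m s' v
  by_cases h1 : v ∈ Vert m s'
  · have h2 := h.mp h1
    simp [h1, h2] at this
    omega
  · have h2 : v ∉ Vert m (s m) := fun hh => h1 (h.mpr hh)
    simp [h1, h2] at this
    omega

/-- Vertex-part potential difference (equation (40) of the paper): writing
`s' = (s'_m, s_{−m})`,
`Ψ^V(s') − Ψ^V(s) = Σ_{v ∈ Vert(s'_m) \ Vert(s_m)} ϱ_v(z_v(s'))
  − Σ_{v ∈ Vert(s_m) \ Vert(s'_m)} ϱ_v(z_v(s))`. -/
theorem potentialV_diff (Vert : ∀ m : ι, S m → Finset V) (ϱ : V → ℕ → ℝ)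
    (s : ∀ n, S n) (m : ι) (s' : S m) :
    potentialV Vert ϱ (Function.update s m s') - potentialV Vert ϱ s =
      (∑ v ∈ Vert m s' \ Vert m (s m),
        ϱ v (congestion Vert (Function.update s m s') v)) -
      ∑ v ∈ Vert m (s m) \ Vert m s', ϱ v (congestion Vert s v) := by
  classical
  have key : ∀ v : V,
      (∑ q ∈ Finset.Icc 1 (congestion Vert (Function.update s m s') v), ϱ v q) -
        (∑ q ∈ Finset.Icc 1 (congestion Vert s v), ϱ v q) =
      (if v ∈ Vert m s' \ Vert m (s m)
        then ϱ v (congestion Vert (Function.update s m s') v) else 0) -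
      (if v ∈ Vert m (s m) \ Vert m s' then ϱ v (congestion Vert s v) else 0) := by
    intro v
    by_cases h1 : v ∈ Vert m s' <;> by_cases h2 : v ∈ Vert m (s m)
    · rw [congestion_update_of_iff Vert s m s' v (by simp [h1, h2])]
      simp [h1, h2]
    · have hz := congestion_update_of_mem_notMem Vert s m s' v h1 h2
      rw [hz, Finset.sum_Icc_succ_top (by omega : 1 ≤ congestion Vert s v + 1)]
      simp [h1, h2]
    · have hz := congestion_update_of_notMem_mem Vert s m s' v h1 h2
      rw [hz, Finset.sum_Icc_succ_top
        (by omega : 1 ≤ congestion Vert (Function.update s m s') v + 1)]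
      simp [h1, h2, hz.symm]
    · rw [congestion_update_of_iff Vert s m s' v (by simp [h1, h2])]
      simp [h1, h2]
  unfold potentialV
  rw [← Finset.sum_sub_distrib]
  rw [Finset.sum_congr rfl fun v _ => key v, Finset.sum_sub_distrib]
  congr 1
  · rw [Finset.sum_ite_mem, Finset.univ_inter]
  · rw [Finset.sum_ite_mem, Finset.univ_inter]
end

section
/- Any global maximizer of the potential is a pure Nash equilibrium: if a strategy profile s* maximizes Ψ over the (finite, nonempty) set of strategy profiles, then for every player m and every s_m ∈ S_m, Ũ_m(s*) ≥ Ũ_m(s_m, s*_{−m}). Consequently the route selection game possesses a pure strategy Nash equilibrium. -/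
open Finset

variable {ι V : Type*} [Fintype ι] [Nonempty ι] [DecidableEq ι] [Fintype V] [DecidableEq V]
variable {S : ι → Type*} [∀ m, Fintype (S m)] [∀ m, Nonempty (S m)]

/-- Congestion at `v` counting only players other than `m`. -/
def congM (Vert : ∀ m : ι, S m → Finset V) (m : ι) (s : ∀ n, S n) (v : V) : ℕ :=
  ((Finset.univ.erase m).filter fun n => v ∈ Vert n (s n)).card

lemma congestion_eq_congM (Vert : ∀ m : ι, S m → Finset V) (m : ι) (s : ∀ n, S n) (v : V) :
    congestion Vert s v = congM Vert m s v + if v ∈ Vert m (s m) then 1 else 0 := by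
  unfold congestion congM
  have h : (Finset.univ : Finset ι) = insert m (Finset.univ.erase m) :=
    (Finset.insert_erase (Finset.mem_univ m)).symm
  conv_lhs => rw [h]
  rw [Finset.filter_insert]
  split_ifs with hv
  · rw [Finset.card_insert_of_notMem (by simp)]
  · simp

lemma congM_update (Vert : ∀ m : ι, S m → Finset V) (m : ι) (s : ∀ n, S n) (sm : S m) (v : V) :
    congM Vert m (Function.update s m sm) v = congM Vert m s v := by
  unfold congM
  congr 1
  apply Finset.filter_congr
  intro n hn
  rw [Function.update_of_ne (Finset.ne_of_mem_erase hn)]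

lemma potentialV_key (Vert : ∀ m : ι, S m → Finset V) (ϱ : V → ℕ → ℝ) (m : ι) (s : ∀ n, S n) :
    potentialV Vert ϱ s =
      (∑ v : V, ∑ q ∈ Finset.Icc 1 (congM Vert m s v), ϱ v q) + payoffV Vert ϱ m s := by
  have hpay : payoffV Vert ϱ m s =
      ∑ v : V, if v ∈ Vert m (s m) then ϱ v (congestion Vert s v) else 0 := by
    rw [Finset.sum_ite_mem, Finset.univ_inter]; rfl
  rw [hpay, ← Finset.sum_add_distrib]
  apply Finset.sum_congr rfl
  intro v _
  rw [congestion_eq_congM Vert m s v]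
  split_ifs with hv
  · rw [Finset.sum_Icc_succ_top (Nat.succ_le_succ (Nat.zero_le _))]
  · simp

lemma potential_sub_payoff (Vert : ∀ m : ι, S m → Finset V) (ϱ : V → ℕ → ℝ)
    (c : ∀ m : ι, S m → ℝ) (m : ι) (s : ∀ n, S n) :
    potential Vert ϱ c s - payoff Vert ϱ c m s =
      (∑ v : V, ∑ q ∈ Finset.Icc 1 (congM Vert m s v), ϱ v q)
        - ∑ n ∈ Finset.univ.erase m, c n (s n) := by
  have hc : (∑ n : ι, c n (s n)) = c m (s m) + ∑ n ∈ Finset.univ.erase m, c n (s n) :=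
    (Finset.add_sum_erase _ _ (Finset.mem_univ m)).symm
  rw [potential, payoff, potentialV_key Vert ϱ m s, hc]
  ring

lemma potential_diff (Vert : ∀ m : ι, S m → Finset V) (ϱ : V → ℕ → ℝ)
    (c : ∀ m : ι, S m → ℝ) (m : ι) (s : ∀ n, S n) (sm : S m) :
    potential Vert ϱ c (Function.update s m sm) - payoff Vert ϱ c m (Function.update s m sm) =
      potential Vert ϱ c s - payoff Vert ϱ c m s := by
  rw [potential_sub_payoff, potential_sub_payoff]
  congr 1
  · apply Finset.sum_congr rfl; intro v _; rw [congM_update]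
  · apply Finset.sum_congr rfl; intro n hn
    rw [Function.update_of_ne (Finset.ne_of_mem_erase hn)]

/-- Any global maximizer of the potential `Ψ` is a pure Nash equilibrium; consequently
the route selection game possesses a pure strategy Nash equilibrium. -/
theorem potential_maximizer_is_NE (Vert : ∀ m : ι, S m → Finset V)
    (ϱ : V → ℕ → ℝ) (c : ∀ m : ι, S m → ℝ) :
    (∀ sStar : ∀ n, S n, (∀ s : ∀ n, S n, potential Vert ϱ c s ≤ potential Vert ϱ c sStar) →
      ∀ (m : ι) (sm : S m),
        payoff Vert ϱ c m (Function.update sStar m sm) ≤ payoff Vert ϱ c m sStar) ∧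
    (∃ sStar : ∀ n, S n, ∀ (m : ι) (sm : S m),
        payoff Vert ϱ c m (Function.update sStar m sm) ≤ payoff Vert ϱ c m sStar) := by
  have H : ∀ sStar : ∀ n, S n, (∀ s : ∀ n, S n, potential Vert ϱ c s ≤ potential Vert ϱ c sStar) →
      ∀ (m : ι) (sm : S m),
        payoff Vert ϱ c m (Function.update sStar m sm) ≤ payoff Vert ϱ c m sStar := by
    intro sStar hmax m sm
    have h := potential_diff Vert ϱ c m sStar sm
    have h2 := hmax (Function.update sStar m sm)
    linarith
  refine ⟨H, ?_⟩
  obtain ⟨sStar, hmax⟩ := Finite.exists_max (potential Vert ϱ c)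
  exact ⟨sStar, H sStar hmax⟩
end
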